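/- Let f(x) = 1/(x log b) · 1_{(1,b)}(x) with b ≥ e. Then the self-convolution g = f * f satisfies g(x) ≤ 1 for all x ∈ ℝ. -/

import Mathlib

open MeasureTheory Real

/-- For `b ≥ e`, the self-convolution of the truncated Pareto density is at most 1. -/
theorem stmt_3 (b : ℝ) (hb : Real.exp 1 ≤ b)
    (f : ℝ → ℝ)
    (hf : f = fun x => if 1 < x ∧ x < b then 1 / (x * Real.log b) else 0)
    (g : ℝ → ℝ) (hg : g = fun x => ∫ y, f (x - y) * f y) :
    ∀ x, g x ≤ 1 := by
  have hb1 : (1:ℝ) < b := lt_of_lt_of_le (by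
    have := Real.add_one_le_exp (1:ℝ); linarith) hb
  have hb0 : (0:ℝ) < b := by linarith
  have hlb : 1 ≤ Real.log b := by
    rw [← Real.log_exp 1]
    exact Real.log_le_log (Real.exp_pos 1) hb
  have hlbpos : 0 < Real.log b := by linarith
  -- f as an indicator
  have hfind : f = (Set.Ioo (1:ℝ) b).indicator (fun x => 1 / (x * Real.log b)) := by
    rw [hf]; ext x
    simp [Set.indicator_apply, Set.mem_Ioo]
  have hfnn : ∀ x, 0 ≤ f x := by
    intro x; rw [hf]
    dsimp only
    split_ifs with h
    · have : (0:ℝ) < x := lt_trans one_pos h.1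
      positivity
    · exact le_refl 0
  have hfle : ∀ x, f x ≤ 1 / Real.log b := by
    intro x; rw [hf]
    dsimp only
    split_ifs with h
    · have hx : (1:ℝ) < x := h.1
      rw [div_le_div_iff₀ (by nlinarith) hlbpos]
      nlinarith
    · positivity
  have hfmeas : Measurable f := by
    rw [hfind]
    exact (Measurable.indicator (by fun_prop) measurableSet_Ioo)
  -- f is integrable
  have hvol : volume (Set.Ioo (1:ℝ) b) < ⊤ := by
    rw [Real.volume_Ioo]; exact ENNReal.ofReal_lt_top
  have hbound : Integrable ((Set.Ioo (1:ℝ) b).indicator (fun _ => 1 / Real.log b)) := by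
    exact (integrable_indicator_iff measurableSet_Ioo).2
      (integrableOn_const hvol.ne)
  have hfint : Integrable f := by
    refine hbound.mono hfmeas.aestronglyMeasurable (ae_of_all _ fun x => ?_)
    rw [Real.norm_eq_abs, abs_of_nonneg (hfnn x)]
    rcases Classical.em (x ∈ Set.Ioo (1:ℝ) b) with h | h
    · rw [Set.indicator_of_mem h, Real.norm_eq_abs, abs_of_nonneg (by positivity)]
      exact hfle x
    · rw [Set.indicator_of_notMem h]
      have : f x = 0 := by
        rw [hf]; dsimp only; rw [if_neg]
        simpa [Set.mem_Ioo] using h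
      simp [this]
  -- integral of f equals 1
  have hintf : ∫ y, f y = 1 := by
    rw [hfind, MeasureTheory.integral_indicator measurableSet_Ioo,
      ← MeasureTheory.integral_Ioc_eq_integral_Ioo,
      ← intervalIntegral.integral_of_le hb1.le]
    have : ∀ x ∈ Set.uIcc (1:ℝ) b, 1 / (x * Real.log b) = (Real.log b)⁻¹ * (1 / x) := by
      intro x _; field_simp
    rw [intervalIntegral.integral_congr this, intervalIntegral.integral_const_mul,
      integral_one_div (by
        intro h0
        rw [Set.uIcc_of_le hb1.le] at h0
        exact absurd h0.1 (by norm_num))]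
    rw [div_one]
    field_simp
  intro x
  rw [hg]
  dsimp only
  -- the integrand is bounded by (1/log b) * f y
  have hptle : ∀ y, f (x - y) * f y ≤ (1 / Real.log b) * f y := fun y =>
    mul_le_mul_of_nonneg_right (hfle _) (hfnn y)
  have hptnn : ∀ y, 0 ≤ f (x - y) * f y := fun y => mul_nonneg (hfnn _) (hfnn _)
  have hrint : Integrable (fun y => (1 / Real.log b) * f y) := hfint.const_mul _
  have hmeas2 : Measurable (fun y => f (x - y) * f y) :=
    (hfmeas.comp (measurable_const.sub measurable_id)).mul hfmeas
  have hint2 : Integrable (fun y => f (x - y) * f y) := by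
    refine hrint.mono hmeas2.aestronglyMeasurable (ae_of_all _ fun y => ?_)
    rw [Real.norm_eq_abs, abs_of_nonneg (hptnn y), Real.norm_eq_abs,
      abs_of_nonneg (mul_nonneg (by positivity) (hfnn y))]
    exact hptle y
  calc ∫ y, f (x - y) * f y ≤ ∫ y, (1 / Real.log b) * f y :=
        integral_mono hint2 hrint hptle
    _ = (1 / Real.log b) * ∫ y, f y := integral_const_mul _ _
    _ = 1 / Real.log b := by rw [hintf, mul_one]
    _ ≤ 1 := by rw [div_le_one hlbpos]; exact hlb
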